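/- The constant function u ≡ −ln(2)/2 is the unique bounded C² function u : ℍ → ℝ satisfying Δ_ℍ u = 2e^{2u} − 1 on ℍ. -/

import Mathlib

open Complex Filter Topology Set

/-- The upper half-plane, as a subset of `ℂ`. -/
def UpperH : Set ℂ := {z : ℂ | 0 < z.im}

/-- The hyperbolic Laplacian of `u : ℂ → ℝ` at `z`:
`Δ_ℍ u(z) = (Im z)² (∂²u/∂x² + ∂²u/∂y²)(z)`. -/
noncomputable def hypLaplacian (u : ℂ → ℝ) (z : ℂ) : ℝ :=
  z.im ^ 2 * (iteratedDeriv 2 (fun t : ℝ => u (z + (t : ℂ))) 0 +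
              iteratedDeriv 2 (fun t : ℝ => u (z + (t : ℂ) * Complex.I)) 0)

/-- The hyperbolic distance on the upper half-plane. -/
noncomputable def hypDist (z w : ℂ) : ℝ :=
  2 * Real.arsinh (‖z - w‖ / (2 * Real.sqrt (z.im * w.im)))

noncomputable def barr (w z : ℂ) : ℝ := 1 + Complex.normSq (z - w) / (2 * w.im * z.im)

lemma isOpen_upperH : IsOpen UpperH := isOpen_lt continuous_const Complex.continuous_im

lemma contDiffAt_nhd {f : ℝ → ℝ} {x : ℝ} (h : ContDiffAt ℝ 2 f x) :
    ∃ u, IsOpen u ∧ x ∈ u ∧ ContDiffOn ℝ 2 f u := by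
  obtain ⟨u, hu, hxu, h⟩ := h.contDiffOn' le_rfl (by simp)
  exact ⟨u, hu, hxu, by simpa using h⟩

lemma iteratedDeriv_eq_within {n : ℕ} {f : ℝ → ℝ} {s : Set ℝ} (hs : IsOpen s) {x : ℝ}
    (hx : x ∈ s) : iteratedDeriv n f x = iteratedDerivWithin n f s x := by
  simp [iteratedDeriv, iteratedDerivWithin, iteratedFDerivWithin_of_isOpen n hs hx]

lemma itd2_sub {f g : ℝ → ℝ} {x : ℝ} (hf : ContDiffAt ℝ 2 f x) (hg : ContDiffAt ℝ 2 g x) :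
    iteratedDeriv 2 (fun t => f t - g t) x = iteratedDeriv 2 f x - iteratedDeriv 2 g x := by
  obtain ⟨u, hu, hxu, hfu⟩ := contDiffAt_nhd hf
  obtain ⟨v, hv, hxv, hgv⟩ := contDiffAt_nhd hg
  have ho : IsOpen (u ∩ v) := hu.inter hv
  have hx : x ∈ u ∩ v := ⟨hxu, hxv⟩
  rw [iteratedDeriv_eq_within ho hx, iteratedDeriv_eq_within (f := f) ho hx,
    iteratedDeriv_eq_within (f := g) ho hx]
  exact iteratedDerivWithin_sub hx ho.uniqueDiffOn (hfu.mono inter_subset_left x hx)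
    (hgv.mono inter_subset_right x hx)

lemma itd2_const_mul {f : ℝ → ℝ} {x : ℝ} (c : ℝ) (hf : ContDiffAt ℝ 2 f x) :
    iteratedDeriv 2 (fun t => c * f t) x = c * iteratedDeriv 2 f x := by
  obtain ⟨u, hu, hxu, hfu⟩ := contDiffAt_nhd hf
  rw [iteratedDeriv_eq_within hu hxu, iteratedDeriv_eq_within (f := f) hu hxu]
  exact iteratedDerivWithin_const_mul hxu hu.uniqueDiffOn c (hfu x hxu)

lemma secondDerivTest {h : ℝ → ℝ} (hd : ContDiffAt ℝ 2 h 0) (hm : IsLocalMax h 0) :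
    iteratedDeriv 2 h 0 ≤ 0 := by
  by_contra hpos
  push_neg at hpos
  obtain ⟨U, hUo, hU0, hU⟩ := contDiffAt_nhd hd
  have hd1 : ContDiffOn ℝ 1 (deriv h) U := hU.deriv_of_isOpen hUo (by norm_num)
  have hdd : DifferentiableAt ℝ (deriv h) 0 :=
    ((hd1.differentiableOn (by norm_num)) 0 hU0).differentiableAt (hUo.mem_nhds hU0)
  have hderiv0 : deriv h 0 = 0 := hm.deriv_eq_zero
  have h2 : deriv (deriv h) 0 = iteratedDeriv 2 h 0 := by
    rw [iteratedDeriv_succ, iteratedDeriv_one]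
  have hslope : Tendsto (slope (deriv h) 0) (𝓝[≠] 0) (𝓝 (iteratedDeriv 2 h 0)) := by
    have := hdd.hasDerivAt
    rw [hasDerivAt_iff_tendsto_slope, h2] at this
    exact this
  have hev : ∀ᶠ t in 𝓝[>] (0:ℝ), 0 < deriv h t := by
    have h1 : ∀ᶠ t in 𝓝[≠] (0:ℝ), 0 < slope (deriv h) 0 t :=
      hslope.eventually (eventually_gt_nhds hpos)
    have h2' : ∀ᶠ t in 𝓝[>] (0:ℝ), 0 < slope (deriv h) 0 t :=
      h1.filter_mono (nhdsWithin_mono 0 (fun t ht => ne_of_gt ht))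
    filter_upwards [h2', self_mem_nhdsWithin] with t h1t h2t
    have hts : slope (deriv h) 0 t = deriv h t / t := by
      rw [slope_def_field, hderiv0, sub_zero, sub_zero]
    rw [hts] at h1t
    have := mul_pos h1t (h2t : (0:ℝ) < t)
    rwa [div_mul_cancel₀ _ (ne_of_gt (h2t : (0:ℝ) < t))] at this
  obtain ⟨δ, hδ, hsub⟩ := mem_nhdsGT_iff_exists_Ioo_subset.1 hev
  obtain ⟨η, hη, hball⟩ := Metric.eventually_nhds_iff.1 hm
  obtain ⟨η2, hη2, hball2⟩ := Metric.mem_nhds_iff.1 (hUo.mem_nhds hU0)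
  set t0 : ℝ := min δ (min η η2) / 2 with ht0def
  have hδ0 : (0:ℝ) < δ := hδ
  have ht0 : 0 < t0 := by positivity
  have ht0δ : t0 < δ := by
    have : min δ (min η η2) ≤ δ := min_le_left _ _
    have h2 : t0 < min δ (min η η2) := by
      rw [ht0def]
      have : 0 < min δ (min η η2) := by positivity
      linarith
    linarith
  have ht0η : t0 < η := by
    have : min δ (min η η2) ≤ η := le_trans (min_le_right _ _) (min_le_left _ _)
    have h2 : 0 < min δ (min η η2) := by positivity
    rw [ht0def]; linarith
  have ht0η2 : t0 < η2 := by
    have : min δ (min η η2) ≤ η2 := le_trans (min_le_right _ _) (min_le_right _ _)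
    have h2 : 0 < min δ (min η η2) := by positivity
    rw [ht0def]; linarith
  have hIccU : Icc (0:ℝ) t0 ⊆ U := by
    intro y hy
    apply hball2
    simp only [Metric.mem_ball, Real.dist_eq, sub_zero]
    rw [_root_.abs_of_nonneg hy.1]
    exact lt_of_le_of_lt hy.2 ht0η2
  have hmono : StrictMonoOn h (Icc (0:ℝ) t0) := by
    apply strictMonoOn_of_deriv_pos (convex_Icc _ _) (hU.continuousOn.mono hIccU)
    intro y hy
    rw [interior_Icc] at hy
    exact hsub ⟨hy.1, lt_trans hy.2 ht0δ⟩
  have hlt : h 0 < h t0 := hmono ⟨le_refl _, le_of_lt ht0⟩ ⟨le_of_lt ht0, le_refl _⟩ ht0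
  have hle : h t0 ≤ h 0 := by
    apply hball
    simp only [Real.dist_eq, sub_zero]
    rw [_root_.abs_of_nonneg (le_of_lt ht0)]
    exact ht0η
  linarith

lemma itd2_quadratic (k l m x : ℝ) :
    iteratedDeriv 2 (fun t : ℝ => k*t^2 + l*t + m) x = 2*k := by
  have hd : deriv (fun t : ℝ => k*t^2 + l*t + m) = fun t => 2*k*t + l := by
    funext t
    have h : HasDerivAt (fun t : ℝ => k*t^2 + l*t + m) (2*k*t + l) t := by
      have h1 : HasDerivAt (fun t : ℝ => t^2) (2*t) t := by simpa using hasDerivAt_pow 2 t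
      have h2 := ((h1.const_mul k).add ((hasDerivAt_id t).const_mul l)).add_const m
      exact h2.congr_deriv (by ring)
    exact h.deriv
  rw [iteratedDeriv_succ, iteratedDeriv_one, hd]
  have h : HasDerivAt (fun t : ℝ => 2*k*t + l) (2*k) x := by
    have h2 := ((hasDerivAt_id x).const_mul (2*k)).add_const l
    simpa using h2
  exact h.deriv

lemma barr_h_eq {z1 z : ℂ} (hb : 0 < z1.im) (hz : 0 < z.im) :
    (fun t : ℝ => barr z1 (z + t)) = fun t : ℝ =>
      (1/(2*z1.im*z.im)) * t^2 + (2*(z.re - z1.re)/(2*z1.im*z.im)) * t +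
      (1 + ((z.re-z1.re)^2 + (z.im-z1.im)^2)/(2*z1.im*z.im)) := by
  have hby : (2:ℝ)*z1.im*z.im ≠ 0 := by positivity
  funext t
  simp only [barr, Complex.normSq_apply, Complex.sub_re, Complex.sub_im, Complex.add_re,
    Complex.add_im, Complex.ofReal_re, Complex.ofReal_im]
  field_simp
  ring

lemma barr_v_eq {z1 z : ℂ} (hb : 0 < z1.im) (hz : 0 < z.im) :
    (fun t : ℝ => barr z1 (z + t*Complex.I)) =ᶠ[𝓝 0] fun t : ℝ =>
      (z.im + t)/(2*z1.im) + ((z1.im^2 + (z.re - z1.re)^2)/(2*z1.im)) * (z.im+t)⁻¹ := by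
  have hb0 : z1.im ≠ 0 := ne_of_gt hb
  have hevpos : ∀ᶠ t : ℝ in 𝓝 0, 0 < z.im + t := by
    filter_upwards [eventually_gt_nhds (show -z.im < (0:ℝ) by linarith)] with t ht
    linarith
  filter_upwards [hevpos] with t ht
  have hyt : z.im + t ≠ 0 := ne_of_gt ht
  simp only [barr, Complex.normSq_apply, Complex.sub_re, Complex.sub_im, Complex.add_re,
    Complex.add_im, Complex.mul_re, Complex.mul_im, Complex.ofReal_re, Complex.ofReal_im,
    Complex.I_re, Complex.I_im, mul_zero, zero_mul, sub_zero, add_zero, mul_one, zero_add]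
  field_simp
  ring

lemma barr_itd2_h {z1 z : ℂ} (hb : 0 < z1.im) (hz : 0 < z.im) :
    iteratedDeriv 2 (fun t : ℝ => barr z1 (z + t)) 0 = 1 / (z1.im * z.im) := by
  rw [barr_h_eq hb hz, itd2_quadratic]
  have hby : (2:ℝ)*z1.im*z.im ≠ 0 := by positivity
  field_simp

lemma barr_itd2_v {z1 z : ℂ} (hb : 0 < z1.im) (hz : 0 < z.im) :
    iteratedDeriv 2 (fun t : ℝ => barr z1 (z + t*Complex.I)) 0
      = (z1.im^2 + (z.re - z1.re)^2) / (z1.im * z.im^3) := by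
  set b := z1.im with hbdef
  set y := z.im with hydef
  set c : ℝ := z1.im^2 + (z.re - z1.re)^2 with hcdef
  have hb0 : b ≠ 0 := ne_of_gt hb
  have hevpos : ∀ᶠ t : ℝ in 𝓝 0, 0 < y + t := by
    filter_upwards [eventually_gt_nhds (show -y < (0:ℝ) by linarith)] with t ht
    linarith
  set g : ℝ → ℝ := fun t => (y + t)/(2*b) + (c/(2*b)) * (y+t)⁻¹ with hgdef
  have hev : (fun t : ℝ => barr z1 (z + t*Complex.I)) =ᶠ[𝓝 0] g := barr_v_eq hb hz
  rw [hev.iteratedDeriv_eq 2]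
  set g1 : ℝ → ℝ := fun t => 1/(2*b) - (c/(2*b)) * ((y+t)^2)⁻¹ with hg1def
  have hgd : ∀ t : ℝ, 0 < y + t → HasDerivAt g (g1 t) t := by
    intro t ht
    have h1 : HasDerivAt (fun t : ℝ => y + t) 1 t := by
      simpa using (hasDerivAt_id t).const_add y
    have h2 := (h1.div_const (2*b)).add (((h1.inv (ne_of_gt ht)).const_mul (c/(2*b))))
    refine h2.congr_deriv ?_
    simp only [hg1def]
    field_simp
    ring
  have hder : deriv g =ᶠ[𝓝 0] g1 := by
    filter_upwards [hevpos] with t ht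
    exact (hgd t ht).deriv
  rw [iteratedDeriv_succ, iteratedDeriv_one, hder.deriv_eq]
  have hy0 : (0:ℝ) < y + 0 := by simpa using hz
  have h1 : HasDerivAt (fun t : ℝ => y + t) 1 0 := by
    simpa using (hasDerivAt_id (0:ℝ)).const_add y
  have h2 : HasDerivAt (fun t : ℝ => (y+t)^2) (2*(y+0)^1*1) 0 := h1.pow 2
  have hne : ((y+(0:ℝ))^2) ≠ 0 := by positivity
  have h3 := ((h2.inv hne).const_mul (c/(2*b))).const_sub (1/(2*b))
  have h4 : deriv g1 0 = -((c/(2*b)) * (-(2*(y+0)^1*1) / ((y+0)^2)^2)) := h3.deriv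
  rw [h4]
  have hyy : y ≠ 0 := ne_of_gt hz
  field_simp
  ring

lemma barr_lap {z1 z : ℂ} (hb : 0 < z1.im) (hz : 0 < z.im) :
    z.im^2 * (1/(z1.im*z.im) + (z1.im^2 + (z.re - z1.re)^2)/(z1.im*z.im^3)) = 2 * barr z1 z := by
  simp only [barr, Complex.normSq_apply, Complex.sub_re, Complex.sub_im]
  have h1 : z1.im ≠ 0 := ne_of_gt hb
  have h2 : z.im ≠ 0 := ne_of_gt hz
  field_simp
  ring

lemma barr_line_h_cd {z1 z : ℂ} (hb : 0 < z1.im) (hz : 0 < z.im) :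
    ContDiffAt ℝ 2 (fun t : ℝ => barr z1 (z + t)) 0 := by
  rw [barr_h_eq hb hz]
  exact (((contDiff_const.mul (contDiff_id.pow 2)).add
    (contDiff_const.mul contDiff_id)).add contDiff_const).contDiffAt

lemma barr_line_v_cd {z1 z : ℂ} (hb : 0 < z1.im) (hz : 0 < z.im) :
    ContDiffAt ℝ 2 (fun t : ℝ => barr z1 (z + t*Complex.I)) 0 := by
  have hg : ContDiffAt ℝ 2 (fun t : ℝ =>
      (z.im + t)/(2*z1.im) + ((z1.im^2 + (z.re - z1.re)^2)/(2*z1.im)) * (z.im+t)⁻¹) 0 := by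
    apply ContDiffAt.add
    · exact ((contDiff_const.add contDiff_id).div_const _).contDiffAt
    · exact contDiffAt_const.mul
        (((contDiff_const.add contDiff_id).contDiffAt).inv (by simpa using ne_of_gt hz))
  exact hg.congr_of_eventuallyEq (barr_v_eq hb hz)
lemma barr_self (z1 : ℂ) : barr z1 z1 = 1 := by simp [barr]

lemma barr_ge_one {z1 z : ℂ} (hb : 0 < z1.im) (hz : 0 < z.im) : 1 ≤ barr z1 z := by
  have h : 0 ≤ Complex.normSq (z - z1) / (2 * z1.im * z.im) :=
    div_nonneg (Complex.normSq_nonneg _) (by positivity)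
  simp only [barr]; linarith

lemma barr_continuousOn (z1 : ℂ) (hb : 0 < z1.im) : ContinuousOn (barr z1) UpperH := by
  apply ContinuousOn.add continuousOn_const
  apply ContinuousOn.div
  · exact (Complex.continuous_normSq.comp (continuous_id.sub continuous_const)).continuousOn
  · exact (continuous_const.mul Complex.continuous_im).continuousOn
  · intro z hz
    have : 0 < z.im := hz
    positivity

lemma exists_max (g : ℂ → ℝ) (hc : ContinuousOn g UpperH) (M : ℝ)
    (hM : ∀ z ∈ UpperH, |g z| ≤ M) {z1 : ℂ} (hz1 : z1 ∈ UpperH) {ε : ℝ} (hε : 0 < ε) :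
    ∃ z0 ∈ UpperH, ∀ z ∈ UpperH, g z - ε * barr z1 z ≤ g z0 - ε * barr z1 z0 := by
  have hb : 0 < z1.im := hz1
  have hM0 : 0 ≤ M := le_trans (abs_nonneg _) (hM z1 hz1)
  set b := z1.im with hbdef
  set D : ℝ := 2*b*(2*M/ε) with hD
  have hD0 : 0 ≤ D := by positivity
  set K : Set ℂ := {z | Complex.normSq (z - z1) ≤ D * z.im ∧ 0 ≤ z.im} with hKdef
  have hz1K : z1 ∈ K := by
    constructor
    · simp only [sub_self, Complex.normSq_zero]
      positivity
    · exact le_of_lt hb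
  have hKU : K ⊆ UpperH := by
    intro z hz
    obtain ⟨h1, h2⟩ := hz
    rw [Complex.normSq_apply] at h1
    simp only [Complex.sub_re, Complex.sub_im] at h1
    rcases eq_or_lt_of_le h2 with h | h
    · exfalso
      nlinarith [sq_nonneg (z.re - z1.re), sq_nonneg (z.im - b)]
    · exact h
  have hclosed : IsClosed K := by
    apply IsClosed.inter
    · exact isClosed_le (Complex.continuous_normSq.comp (continuous_id.sub continuous_const))
        (continuous_const.mul Complex.continuous_im)
    · exact isClosed_le continuous_const Complex.continuous_im
  have hKc : IsCompact K := by
    apply (isCompact_closedBall z1 (Real.sqrt (D*(2*b+D)))).of_isClosed_subset hclosed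
    intro z hz
    obtain ⟨h1, h2⟩ := hz
    have hyb : z.im ≤ 2*b + D := by
      rw [Complex.normSq_apply] at h1
      simp only [Complex.sub_re, Complex.sub_im] at h1
      nlinarith [sq_nonneg (z.re - z1.re), sq_nonneg (z.im - b)]
    have h3 : Complex.normSq (z - z1) ≤ D*(2*b+D) := by nlinarith
    simp only [Metric.mem_closedBall, Complex.dist_eq, Complex.norm_def]
    exact Real.sqrt_le_sqrt h3
  have hwcont : ContinuousOn (fun z => g z - ε * barr z1 z) K := by
    exact ((hc.mono hKU).sub ((continuousOn_const.mul (barr_continuousOn z1 hb)).mono hKU))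
  obtain ⟨z0, hz0K, hmax⟩ := hKc.exists_isMaxOn ⟨z1, hz1K⟩ hwcont
  refine ⟨z0, hKU hz0K, ?_⟩
  intro z hzU
  by_cases hzK : z ∈ K
  · exact hmax hzK
  · have hzim : 0 < z.im := hzU
    have h1 : D * z.im < Complex.normSq (z - z1) := by
      by_contra hcon
      push_neg at hcon
      exact hzK ⟨hcon, le_of_lt hzim⟩
    have h2 : 2*M/ε + 1 < barr z1 z := by
      have hden : 0 < 2*b*z.im := by positivity
      have := (div_lt_div_iff_of_pos_right hden).2 h1
      have heq : D * z.im / (2*b*z.im) = 2*M/ε := by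
        rw [hD]; field_simp
      rw [heq] at this
      simp only [barr]; linarith
    have hgz : g z ≤ M := le_trans (le_abs_self _) (hM z hzU)
    have hgz1 : -M ≤ g z1 := neg_le_of_abs_le (hM z1 hz1)
    have hεbarr : 2*M + ε < ε * barr z1 z := by
      have := mul_lt_mul_of_pos_left h2 hε
      have heq : ε * (2*M/ε + 1) = 2*M + ε := by field_simp
      rw [heq] at this
      linarith
    have hwz1 : g z1 - ε * barr z1 z1 ≤ g z0 - ε * barr z1 z0 := hmax hz1K
    rw [barr_self] at hwz1
    linarith

lemma hypLaplacian_neg (u : ℂ → ℝ) (z : ℂ) :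
    hypLaplacian (fun w => -u w) z = -hypLaplacian u z := by
  simp only [hypLaplacian, iteratedDeriv_fun_neg]
  ring

lemma key {u : ℂ → ℝ} (hu : ContDiffOn ℝ 2 u UpperH) {M : ℝ} (hM : ∀ z ∈ UpperH, |u z| ≤ M)
    {z1 : ℂ} (hz1 : z1 ∈ UpperH) {ε : ℝ} (hε : 0 < ε) :
    ∃ z0 ∈ UpperH, (u z1 - ε ≤ u z0 - ε * barr z1 z0) ∧
      hypLaplacian u z0 ≤ 2 * ε * barr z1 z0 := by
  obtain ⟨z0, hz0, hmax⟩ := exists_max u hu.continuousOn M hM hz1 hε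
  have hb : 0 < z1.im := hz1
  have hy : 0 < z0.im := hz0
  refine ⟨z0, hz0, ?_, ?_⟩
  · have h := hmax z1 hz1
    rw [barr_self] at h
    linarith
  · have hucd : ContDiffAt ℝ 2 u z0 := hu.contDiffAt (isOpen_upperH.mem_nhds hz0)
    have hLh : ContDiff ℝ 2 (fun t : ℝ => z0 + (t:ℂ)) := contDiff_const.add Complex.ofRealCLM.contDiff
    have hlineh : ContDiffAt ℝ 2 (fun t : ℝ => u (z0 + (t:ℂ))) 0 := by
      have := ContDiffAt.comp (0:ℝ) (g := u) (f := fun t : ℝ => z0 + (t:ℂ))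
        (by simpa using hucd) hLh.contDiffAt
      exact this
    have hLv : ContDiff ℝ 2 (fun t : ℝ => z0 + (t:ℂ)*Complex.I) :=
      contDiff_const.add (Complex.ofRealCLM.contDiff.mul contDiff_const)
    have hlinev : ContDiffAt ℝ 2 (fun t : ℝ => u (z0 + (t:ℂ)*Complex.I)) 0 := by
      have := ContDiffAt.comp (0:ℝ) (g := u) (f := fun t : ℝ => z0 + (t:ℂ)*Complex.I)
        (by simpa using hucd) hLv.contDiffAt
      exact this
    have hbh := barr_line_h_cd hb hy
    have hbv := barr_line_v_cd hb hy
    have hmaxh : IsLocalMax (fun t : ℝ => u (z0 + (t:ℂ)) - ε * barr z1 (z0 + (t:ℂ))) 0 := by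
      have hev : ∀ᶠ t : ℝ in 𝓝 (0:ℝ), z0 + (t:ℂ) ∈ UpperH :=
        (hLh.continuous.continuousAt).eventually_mem
          (isOpen_upperH.mem_nhds (by simpa using hz0))
      unfold IsLocalMax IsMaxFilter
      filter_upwards [hev] with t ht
      simp only [Complex.ofReal_zero, add_zero]
      exact hmax _ ht
    have hmaxv : IsLocalMax (fun t : ℝ => u (z0 + (t:ℂ)*Complex.I)
        - ε * barr z1 (z0 + (t:ℂ)*Complex.I)) 0 := by
      have hev : ∀ᶠ t : ℝ in 𝓝 (0:ℝ), z0 + (t:ℂ)*Complex.I ∈ UpperH :=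
        (hLv.continuous.continuousAt).eventually_mem
          (isOpen_upperH.mem_nhds (by simpa using hz0))
      unfold IsLocalMax IsMaxFilter
      filter_upwards [hev] with t ht
      simp only [Complex.ofReal_zero, zero_mul, add_zero]
      exact hmax _ ht
    have hth := secondDerivTest (hlineh.sub (contDiffAt_const.mul hbh)) hmaxh
    rw [itd2_sub hlineh (contDiffAt_const.mul hbh), itd2_const_mul ε hbh,
      barr_itd2_h hb hy] at hth
    have htv := secondDerivTest (hlinev.sub (contDiffAt_const.mul hbv)) hmaxv
    rw [itd2_sub hlinev (contDiffAt_const.mul hbv), itd2_const_mul ε hbv,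
      barr_itd2_v hb hy] at htv
    have hlapeq := barr_lap hb hy
    simp only [hypLaplacian]
    set A := iteratedDeriv 2 (fun t : ℝ => u (z0 + (t:ℂ))) 0 with hA
    set B := iteratedDeriv 2 (fun t : ℝ => u (z0 + (t:ℂ)*Complex.I)) 0 with hB
    have h1 : A + B ≤ ε * (1/(z1.im*z0.im)
        + (z1.im^2 + (z0.re - z1.re)^2)/(z1.im*z0.im^3)) := by
      have e1 : ε * (1/(z1.im*z0.im) + (z1.im^2 + (z0.re - z1.re)^2)/(z1.im*z0.im^3))
          = ε * (1/(z1.im*z0.im)) + ε * ((z1.im^2 + (z0.re - z1.re)^2)/(z1.im*z0.im^3)) := by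
        ring
      rw [e1]
      linarith
    have h2 := mul_le_mul_of_nonneg_left h1 (sq_nonneg z0.im)
    have h3 : z0.im^2 * (ε * (1/(z1.im*z0.im)
        + (z1.im^2 + (z0.re - z1.re)^2)/(z1.im*z0.im^3)))
        = ε * (z0.im^2 * (1/(z1.im*z0.im)
        + (z1.im^2 + (z0.re - z1.re)^2)/(z1.im*z0.im^3))) := by ring
    rw [h3, hlapeq] at h2
    linarith

/-- The constant function `−ln(2)/2` is the unique bounded `C²` solution of
`Δ_ℍ u = 2e^{2u} − 1` on the upper half-plane. -/
theorem gauss_equation_f_zero :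
    (ContDiffOn ℝ 2 (fun _ : ℂ => -Real.log 2 / 2) UpperH ∧
      (∃ M : ℝ, ∀ z ∈ UpperH, |(-Real.log 2 / 2 : ℝ)| ≤ M) ∧
      ∀ z ∈ UpperH,
        hypLaplacian (fun _ : ℂ => -Real.log 2 / 2) z =
          2 * Real.exp (2 * (-Real.log 2 / 2)) - 1) ∧
    ∀ u : ℂ → ℝ,
      ContDiffOn ℝ 2 u UpperH →
      (∃ M : ℝ, ∀ z ∈ UpperH, |u z| ≤ M) →
      (∀ z ∈ UpperH, hypLaplacian u z = 2 * Real.exp (2 * u z) - 1) →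
      ∀ z ∈ UpperH, u z = -Real.log 2 / 2 := by
  constructor
  · refine ⟨contDiffOn_const, ⟨|(-Real.log 2 / 2 : ℝ)|, fun z _ => le_refl _⟩, ?_⟩
    intro z hz
    have h0 : iteratedDeriv 2 (fun _ : ℝ => (-Real.log 2 / 2 : ℝ)) 0 = 0 := by
      rw [iteratedDeriv_succ, iteratedDeriv_one]
      simp
    simp only [hypLaplacian]
    rw [h0]
    rw [show (2 : ℝ) * (-Real.log 2/2) = -Real.log 2 by ring, Real.exp_neg,
      Real.exp_log (by norm_num : (0:ℝ) < 2)]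
    norm_num
  · intro u hu hMex heq z hz
    obtain ⟨M, hM⟩ := hMex
    set S := sSup (u '' UpperH) with hSdef
    set I := sInf (u '' UpperH) with hIdef
    have hne : (u '' UpperH).Nonempty := ⟨u z, ⟨z, hz, rfl⟩⟩
    have hbdd : BddAbove (u '' UpperH) := by
      refine ⟨M, ?_⟩
      rintro x ⟨w, hw, rfl⟩
      exact le_trans (le_abs_self _) (hM w hw)
    have hbddb : BddBelow (u '' UpperH) := by
      refine ⟨-M, ?_⟩
      rintro x ⟨w, hw, rfl⟩
      exact neg_le_of_abs_le (hM w hw)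
    have hSle : ∀ δ : ℝ, 0 < δ → 2 * Real.exp (2*(S - δ)) ≤ 1 + 4*δ := by
      intro δ hδ
      obtain ⟨x, hxmem, hx⟩ := exists_lt_of_lt_csSup hne (show S - δ < S by linarith)
      obtain ⟨z1, hz1, rfl⟩ := hxmem
      obtain ⟨z0, hz0, hmax1, hlap⟩ := key hu hM hz1 hδ
      have hz0S : u z0 ≤ S := le_csSup hbdd ⟨z0, hz0, rfl⟩
      have hbarr1 : 1 ≤ barr z1 z0 := barr_ge_one hz1 hz0
      have hδb : δ*1 ≤ δ*barr z1 z0 := mul_le_mul_of_nonneg_left hbarr1 (le_of_lt hδ)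
      have h1 : δ * barr z1 z0 ≤ 2*δ := by linarith
      have h2 : S - δ < u z0 := by linarith
      rw [heq z0 hz0] at hlap
      have h4 : Real.exp (2*(S-δ)) ≤ Real.exp (2*u z0) := Real.exp_le_exp.2 (by linarith)
      have h5 : 2*δ*barr z1 z0 = 2*(δ*barr z1 z0) := by ring
      rw [h5] at hlap
      linarith
    have hIge : ∀ δ : ℝ, 0 < δ → 1 - 4*δ ≤ 2 * Real.exp (2*(I + δ)) := by
      intro δ hδ
      obtain ⟨x, hxmem, hx⟩ := exists_lt_of_csInf_lt hne (show I < I + δ by linarith)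
      obtain ⟨z1, hz1, rfl⟩ := hxmem
      have hMneg : ∀ w ∈ UpperH, |(fun w => -u w) w| ≤ M := by
        intro w hw
        simpa [abs_neg] using hM w hw
      obtain ⟨z0, hz0, hmax1, hlap⟩ := key hu.neg hMneg hz1 hδ
      have hz0I : I ≤ u z0 := csInf_le hbddb ⟨z0, hz0, rfl⟩
      have hbarr1 : 1 ≤ barr z1 z0 := barr_ge_one hz1 hz0
      have hδb : δ*1 ≤ δ*barr z1 z0 := mul_le_mul_of_nonneg_left hbarr1 (le_of_lt hδ)
      have h1 : δ * barr z1 z0 ≤ 2*δ := by linarith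
      have h2 : u z0 < I + δ := by linarith
      rw [hypLaplacian_neg, heq z0 hz0] at hlap
      have h4 : Real.exp (2*u z0) ≤ Real.exp (2*(I+δ)) := Real.exp_le_exp.2 (by linarith)
      have h5 : 2*δ*barr z1 z0 = 2*(δ*barr z1 z0) := by ring
      rw [h5] at hlap
      linarith
    have hS2 : 2 * Real.exp (2*S) ≤ 1 := by
      by_contra hcon
      push_neg at hcon
      set θ : ℝ := 2*Real.exp (2*S) - 1 with hθdef
      have hθ : 0 < θ := by simp only [hθdef]; linarith
      set δ : ℝ := θ/(12 + 4*θ) with hδdef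
      have hδpos : 0 < δ := by positivity
      have hkey := hSle δ hδpos
      have hexp : Real.exp (2*(S-δ)) = Real.exp (2*S) * Real.exp (-(2*δ)) := by
        rw [← Real.exp_add]; ring_nf
      have hge : 1 - 2*δ ≤ Real.exp (-(2*δ)) := by
        have := Real.add_one_le_exp (-(2*δ)); linarith
      have h5 : (1+θ)*(1-2*δ) ≤ 2*Real.exp (2*(S-δ)) := by
        have h6 : (0:ℝ) ≤ 1 + θ := by linarith
        have h7 := mul_le_mul_of_nonneg_left hge h6
        rw [hexp]
        have h8 : (1:ℝ) + θ = 2*Real.exp (2*S) := by simp only [hθdef]; ring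
        calc (1+θ)*(1-2*δ) ≤ (1+θ) * Real.exp (-(2*δ)) := h7
          _ = 2*Real.exp (2*S) * Real.exp (-(2*δ)) := by rw [h8]
          _ = 2*(Real.exp (2*S) * Real.exp (-(2*δ))) := by ring
      have heqδ : δ*(6+2*θ) = θ/2 := by
        rw [hδdef]
        field_simp
        ring
      nlinarith [h5, hkey, heqδ]
    have hSbound : S ≤ -Real.log 2/2 := by
      have h1 : Real.exp (2*S) ≤ 1/2 := by linarith
      have h2 : (1:ℝ)/2 = Real.exp (Real.log (1/2)) := (Real.exp_log (by norm_num)).symm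
      rw [h2] at h1
      have h3 := Real.exp_le_exp.1 h1
      have h4 : Real.log (1/2) = -Real.log 2 := by rw [one_div, Real.log_inv]
      rw [h4] at h3
      linarith
    have hI2 : 1 ≤ 2 * Real.exp (2*I) := by
      by_contra hcon
      push_neg at hcon
      set θ : ℝ := 1 - 2*Real.exp (2*I) with hθdef
      have hθ : 0 < θ := by simp only [hθdef]; linarith
      set δ : ℝ := min (θ/12) (1/4) with hδdef
      have hδpos : 0 < δ := by
        apply lt_min (by positivity) (by norm_num)
      have hδ12 : δ ≤ θ/12 := min_le_left _ _
      have hδ4 : δ ≤ 1/4 := min_le_right _ _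
      have hkey := hIge δ hδpos
      have hsmall : Real.exp (2*δ) * (1 - 2*δ) ≤ 1 := by
        have h1 := Real.add_one_le_exp (-(2*δ))
        have h2 := mul_le_mul_of_nonneg_left (show 1 - 2*δ ≤ Real.exp (-(2*δ)) by linarith)
          (le_of_lt (Real.exp_pos (2*δ)))
        rw [← Real.exp_add] at h2
        simpa using h2
      have hE : 2*Real.exp (2*(I+δ)) * (1-2*δ) ≤ 1 - θ := by
        have h1 : Real.exp (2*(I+δ)) = Real.exp (2*I) * Real.exp (2*δ) := by
          rw [← Real.exp_add]; ring_nf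
        have h2 : (0:ℝ) ≤ 2*Real.exp (2*I) := by positivity
        have h3 := mul_le_mul_of_nonneg_left hsmall h2
        calc 2*Real.exp (2*(I+δ)) * (1-2*δ)
            = 2*Real.exp (2*I) * (Real.exp (2*δ) * (1-2*δ)) := by rw [h1]; ring
          _ ≤ 2*Real.exp (2*I) * 1 := h3
          _ = 1 - θ := by simp only [hθdef]; ring
      nlinarith [hE, hkey, Real.exp_pos (2*(I+δ))]
    have hIbound : -Real.log 2/2 ≤ I := by
      have h1 : 1/2 ≤ Real.exp (2*I) := by linarith
      have h2 : (1:ℝ)/2 = Real.exp (Real.log (1/2)) := (Real.exp_log (by norm_num)).symm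
      rw [h2] at h1
      have h3 := Real.exp_le_exp.1 h1
      have h4 : Real.log (1/2) = -Real.log 2 := by rw [one_div, Real.log_inv]
      rw [h4] at h3
      linarith
    have h5 : u z ≤ S := le_csSup hbdd ⟨z, hz, rfl⟩
    have h6 : I ≤ u z := csInf_le hbddb ⟨z, hz, rfl⟩
    linarith
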